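/- For every real number x > 0, the double series over integers k, k' ≥ 1 with k + k' ≥ 3 of the terms x^(2(k+k')) / ((2k)!·(2k')!) · ( 1/(2(k+k')+1) − 1/((2k+1)(2k'+1)) ) converges and its sum equals (1/2)·( 1 + sinh(2x)/(2x) − 2·(sinh(x)/x)² − 2x⁴/45 ). -/

import Mathlib

open Finset

private lemma evenChooseSum (n : ℕ) (hn : n ≠ 0) :
    ∑ k ∈ Finset.range (n + 1), (((2 * n).choose (2 * k) : ℕ) : ℝ) = 2 ^ (2 * n) / 2 := by
  have key : ∑ k ∈ Finset.range (n + 1), (((2 * n).choose (2 * k) : ℕ) : ℝ)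
      = ∑ i ∈ Finset.range (2 * n + 1),
          (if Even i then (((2 * n).choose i : ℕ) : ℝ) else 0) := by
    have hsub : (Finset.range (n + 1)).image (fun k => 2 * k) ⊆ Finset.range (2 * n + 1) := by
      intro i hi
      simp only [Finset.mem_image, Finset.mem_range] at hi ⊢
      omega
    rw [← Finset.sum_subset hsub ?_]
    · rw [Finset.sum_image (by intro a _ b _ h; simp only at h; omega)]
      apply Finset.sum_congr rfl
      intro k _
      simp [even_two_mul]
    · intro i hi hni
      simp only [Finset.mem_range] at hi
      simp only [Finset.mem_image, Finset.mem_range] at hni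
      have : ¬ Even i := by
        rintro ⟨j, rfl⟩
        exact hni ⟨j, by omega, by omega⟩
      simp [this]
  have h1 : ∑ i ∈ Finset.range (2 * n + 1), (((2 * n).choose i : ℕ) : ℝ) = 2 ^ (2 * n) := by
    exact_mod_cast congrArg (Nat.cast : ℕ → ℝ) (Nat.sum_range_choose (2 * n))
  have h2 : ∑ i ∈ Finset.range (2 * n + 1), ((-1 : ℝ)) ^ i * (((2 * n).choose i : ℕ) : ℝ) = 0 := by
    have := Int.alternating_sum_range_choose_of_ne (n := 2 * n) (by omega)
    exact_mod_cast congrArg (Int.cast : ℤ → ℝ) this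
  have h3 : (∑ i ∈ Finset.range (2 * n + 1),
      (if Even i then (((2 * n).choose i : ℕ) : ℝ) else 0)) * 2 = 2 ^ (2 * n) := by
    rw [Finset.sum_mul]
    have : ∀ i ∈ Finset.range (2 * n + 1),
        (if Even i then (((2 * n).choose i : ℕ) : ℝ) else 0) * 2
          = (((2 * n).choose i : ℕ) : ℝ) + (-1 : ℝ) ^ i * (((2 * n).choose i : ℕ) : ℝ) := by
      intro i _
      rcases Nat.even_or_odd i with h | h
      · rw [if_pos h, h.neg_one_pow]; ring
      · rw [if_neg (Nat.not_even_iff_odd.2 h), h.neg_one_pow]; ring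
    rw [Finset.sum_congr rfl this, Finset.sum_add_distrib, h1, h2, add_zero]
  rw [key]
  linarith

private lemma factSum (n : ℕ) (hn : n ≠ 0) :
    ∑ k ∈ Finset.range (n + 1), (1 : ℝ) / (((2 * k).factorial : ℝ) * ((2 * (n - k)).factorial : ℝ))
      = 2 ^ (2 * n) / (2 * ((2 * n).factorial : ℝ)) := by
  have step : ∀ k ∈ Finset.range (n + 1),
      (1 : ℝ) / (((2 * k).factorial : ℝ) * ((2 * (n - k)).factorial : ℝ))
        = (((2 * n).choose (2 * k) : ℕ) : ℝ) / (((2 * n).factorial : ℝ)) := by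
    intro k hk
    rw [Finset.mem_range] at hk
    have h2k : 2 * k ≤ 2 * n := by omega
    have hch := Nat.choose_mul_factorial_mul_factorial h2k
    have hsub : 2 * (n - k) = 2 * n - 2 * k := by omega
    rw [hsub]
    rw [div_eq_div_iff (by positivity) (by positivity)]
    rw [one_mul]
    exact_mod_cast (by rw [← hch]; ring : ((2*n).factorial : ℕ) = (2 * n).choose (2 * k) * ((2 * k).factorial * (2 * n - 2 * k).factorial))
  rw [Finset.sum_congr rfl step, ← Finset.sum_div, evenChooseSum n hn, div_div]

private noncomputable def cA (x : ℝ) (p : ℕ × ℕ) : ℝ :=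
  x ^ (2 * (p.1 + p.2)) / (((2 * p.1).factorial : ℝ) * ((2 * p.2).factorial : ℝ)) *
    (1 / (2 * ((p.1 : ℝ) + (p.2 : ℝ)) + 1))

private noncomputable def aF (x : ℝ) (k : ℕ) : ℝ := x ^ (2 * k) / ((2 * k + 1).factorial : ℝ)

private noncomputable def cF (x : ℝ) (k : ℕ) : ℝ := x ^ (2 * k) / ((2 * k).factorial : ℝ)

private noncomputable def cB (x : ℝ) (p : ℕ × ℕ) : ℝ := aF x p.1 * aF x p.2

private lemma fact_succ_real (m : ℕ) : ((m + 1).factorial : ℝ) = (m + 1) * (m.factorial : ℝ) := by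
  rw [Nat.factorial_succ]; push_cast; ring

private lemma fact21_real (k : ℕ) : ((2 * k + 1).factorial : ℝ)
    = (2 * (k : ℝ) + 1) * ((2 * k).factorial : ℝ) := by
  rw [fact_succ_real]; push_cast; ring

private lemma cA_eq (x : ℝ) (p : ℕ × ℕ) :
    cA x p = cF x p.1 * cF x p.2 * (1 / (2 * ((p.1 : ℝ) + (p.2 : ℝ)) + 1)) := by
  unfold cA cF
  rw [mul_add, pow_add]
  ring

private lemma cB_eq (x : ℝ) (p : ℕ × ℕ) :
    cB x p = cF x p.1 * cF x p.2 * (1 / ((2 * (p.1 : ℝ) + 1) * (2 * (p.2 : ℝ) + 1))) := by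
  unfold cB aF cF
  rw [fact21_real, fact21_real, mul_comm (2 * (p.1 : ℝ) + 1), mul_comm (2 * (p.2 : ℝ) + 1),
    ← div_div, ← div_div, div_mul_div_comm, mul_one_div]

private lemma antidiagSum (x : ℝ) (n : ℕ) (hn : n ≠ 0) :
    ∑ kl ∈ Finset.HasAntidiagonal.antidiagonal n, cA x kl
      = (2 * x) ^ (2 * n) / (2 * ((2 * n + 1).factorial : ℝ)) := by
  have h1 : ∀ kl ∈ Finset.HasAntidiagonal.antidiagonal n,
      cA x kl = x ^ (2 * n) / (2 * (n : ℝ) + 1)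
        * (1 / (((2 * kl.1).factorial : ℝ) * ((2 * kl.2).factorial : ℝ))) := by
    intro kl h
    rw [Finset.HasAntidiagonal.mem_antidiagonal] at h
    have hc : ((kl.1 : ℝ) + (kl.2 : ℝ)) = (n : ℝ) := by exact_mod_cast congrArg (Nat.cast : ℕ → ℝ) h
    unfold cA
    rw [h, hc]
    ring
  rw [Finset.sum_congr rfl h1, ← Finset.mul_sum,
    Finset.Nat.sum_antidiagonal_eq_sum_range_succ_mk, factSum n hn, fact21_real, mul_pow]
  have h3 : (2 * (n : ℝ) + 1) ≠ 0 := by positivity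
  have h4 : ((2 * n).factorial : ℝ) ≠ 0 := by positivity
  field_simp

private lemma antidiagSum0 (x : ℝ) : ∑ kl ∈ Finset.HasAntidiagonal.antidiagonal 0, cA x kl = 1 := by
  simp [cA]

private lemma diagDecomp {F : ℕ × ℕ → ℝ} (hF : Summable F) :
    Summable (fun n => ∑ kl ∈ Finset.HasAntidiagonal.antidiagonal n, F kl) ∧
      (∑' p : ℕ × ℕ, F p) = ∑' n : ℕ, ∑ kl ∈ Finset.HasAntidiagonal.antidiagonal n, F kl := by
  have h : Summable fun x : Σ n : ℕ, Finset.HasAntidiagonal.antidiagonal n => F (x.2 : ℕ × ℕ) :=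
    Finset.HasAntidiagonal.sigmaAntidiagonalEquivProd.summable_iff.mpr hF
  constructor
  · conv => congr; ext; rw [← Finset.sum_finset_coe, ← tsum_fintype (L := .unconditional _)]
    exact h.sigma' fun n => (hasSum_fintype _).summable
  · conv_rhs => congr; ext; rw [← Finset.sum_finset_coe, ← tsum_fintype (L := .unconditional _)]
    rw [← Finset.HasAntidiagonal.sigmaAntidiagonalEquivProd.tsum_eq (F : ℕ × ℕ → ℝ)]
    exact Summable.tsum_sigma' (fun n => (hasSum_fintype _).summable) h

private lemma hasSum_aF {x : ℝ} (hx : x ≠ 0) : HasSum (aF x) (Real.sinh x / x) := by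
  have h2 := (Real.hasSum_sinh x).mul_left x⁻¹
  have he : (fun k => x⁻¹ * (x ^ (2 * k + 1) / ((2 * k + 1).factorial : ℝ))) = aF x := by
    funext k
    unfold aF
    rw [pow_succ, mul_comm (x ^ (2 * k)) x, ← mul_div_assoc, ← mul_assoc,
      inv_mul_cancel₀ hx, one_mul]
  rw [he, ← div_eq_inv_mul] at h2
  exact h2

private lemma term_eq (x : ℝ) (p : ℕ × ℕ) :
    x ^ (2 * (p.1 + p.2)) / (((2 * p.1).factorial : ℝ) * ((2 * p.2).factorial : ℝ)) *
      (1 / (2 * ((p.1 : ℝ) + (p.2 : ℝ)) + 1) -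
        1 / ((2 * (p.1 : ℝ) + 1) * (2 * (p.2 : ℝ) + 1)))
      = cA x p - cB x p := by
  have h : cF x p.1 * cF x p.2
      = x ^ (2 * (p.1 + p.2)) / (((2 * p.1).factorial : ℝ) * ((2 * p.2).factorial : ℝ)) := by
    unfold cF
    rw [mul_add, pow_add, div_mul_div_comm]
  unfold cA
  rw [mul_sub, cB_eq, h]

private noncomputable def fT (x : ℝ) (p : ℕ × ℕ) : ℝ :=
  if 1 ≤ p.1 ∧ 1 ≤ p.2 ∧ 3 ≤ p.1 + p.2 then
    x ^ (2 * (p.1 + p.2)) / (((2 * p.1).factorial : ℝ) * ((2 * p.2).factorial : ℝ)) *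
      (1 / (2 * ((p.1 : ℝ) + (p.2 : ℝ)) + 1) -
        1 / ((2 * (p.1 : ℝ) + 1) * (2 * (p.2 : ℝ) + 1)))
  else 0

set_option maxHeartbeats 2000000 in
/-- For every real `x > 0`, the double series over pairs of positive
integers `(k, k')` with `k + k' ≥ 3` of the terms
`x^(2(k+k')) / ((2k)!·(2k')!) · (1/(2(k+k')+1) − 1/((2k+1)(2k'+1)))`
is summable, and its (unordered) sum equals
`(1/2)·(1 + sinh(2x)/(2x) − 2·(sinh x / x)² − 2x⁴/45)`. -/
theorem stmt0 (x : ℝ) (hx : 0 < x) :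
    Summable (fun p : ℕ × ℕ =>
      if 1 ≤ p.1 ∧ 1 ≤ p.2 ∧ 3 ≤ p.1 + p.2 then
        x ^ (2 * (p.1 + p.2)) / (((2 * p.1).factorial : ℝ) * ((2 * p.2).factorial : ℝ)) *
          (1 / (2 * ((p.1 : ℝ) + (p.2 : ℝ)) + 1) -
            1 / ((2 * (p.1 : ℝ) + 1) * (2 * (p.2 : ℝ) + 1)))
      else 0) ∧
    (∑' p : ℕ × ℕ,
      if 1 ≤ p.1 ∧ 1 ≤ p.2 ∧ 3 ≤ p.1 + p.2 then
        x ^ (2 * (p.1 + p.2)) / (((2 * p.1).factorial : ℝ) * ((2 * p.2).factorial : ℝ)) *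
          (1 / (2 * ((p.1 : ℝ) + (p.2 : ℝ)) + 1) -
            1 / ((2 * (p.1 : ℝ) + 1) * (2 * (p.2 : ℝ) + 1)))
      else 0) =
      (1 / 2) * (1 + Real.sinh (2 * x) / (2 * x) - 2 * (Real.sinh x / x) ^ 2
        - 2 * x ^ 4 / 45) := by
  have hx0 : x ≠ 0 := ne_of_gt hx
  set s : ℝ := Real.sinh x / x with hs_def
  set s2 : ℝ := Real.sinh (2 * x) / (2 * x) with hs2_def
  have ha : HasSum (aF x) s := hasSum_aF hx0
  have ha2 : HasSum (aF (2 * x)) s2 := hasSum_aF (by positivity)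
  have hcS : Summable (cF x) := (Real.hasSum_cosh x).summable
  have hcFnn : ∀ y : ℝ, ∀ k, 0 ≤ cF y k := fun y k =>
    div_nonneg ((even_two_mul k).pow_nonneg y) (by positivity)
  have haFnn : ∀ k, 0 ≤ aF x k := fun k =>
    div_nonneg ((even_two_mul k).pow_nonneg x) (by positivity)
  have hccS : Summable (fun p : ℕ × ℕ => cF x p.1 * cF x p.2) :=
    hcS.mul_of_nonneg hcS (fun k => hcFnn x k) (fun k => hcFnn x k)
  have hA0 : ∀ p : ℕ × ℕ, 0 ≤ cA x p := by
    intro p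
    rw [cA_eq]
    have h1 : (0:ℝ) < 2 * ((p.1 : ℝ) + (p.2 : ℝ)) + 1 := by positivity
    have := hcFnn x p.1
    have := hcFnn x p.2
    positivity
  have hB0 : ∀ p : ℕ × ℕ, 0 ≤ cB x p := fun p => mul_nonneg (haFnn p.1) (haFnn p.2)
  have hAle : ∀ p : ℕ × ℕ, cA x p ≤ cF x p.1 * cF x p.2 := by
    intro p
    rw [cA_eq]
    apply mul_le_of_le_one_right (mul_nonneg (hcFnn x p.1) (hcFnn x p.2))
    rw [div_le_one (by positivity)]
    have h1 : (0:ℝ) ≤ (p.1 : ℝ) := Nat.cast_nonneg _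
    have h2 : (0:ℝ) ≤ (p.2 : ℝ) := Nat.cast_nonneg _
    linarith
  have hBA : ∀ p : ℕ × ℕ, cB x p ≤ cA x p := by
    intro p
    rw [cA_eq, cB_eq]
    apply mul_le_mul_of_nonneg_left _ (mul_nonneg (hcFnn x p.1) (hcFnn x p.2))
    have h1 : (0:ℝ) ≤ (p.1 : ℝ) := Nat.cast_nonneg _
    have h2 : (0:ℝ) ≤ (p.2 : ℝ) := Nat.cast_nonneg _
    apply one_div_le_one_div_of_le (by positivity)
    nlinarith
  have hAS : Summable (cA x) := Summable.of_nonneg_of_le hA0 hAle hccS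
  obtain ⟨hDsum, hDeq⟩ := diagDecomp hAS
  -- value of the full A-sum
  have hshift_a2 : (∑' k : ℕ, aF (2 * x) (k + 1)) = s2 - 1 := by
    have h0 := Summable.tsum_eq_zero_add ha2.summable
    rw [ha2.tsum_eq] at h0
    have ha20 : aF (2 * x) 0 = 1 := by simp [aF]
    rw [ha20] at h0
    linarith
  have hshift_a : (∑' k : ℕ, aF x (k + 1)) = s - 1 := by
    have h0 := Summable.tsum_eq_zero_add ha.summable
    rw [ha.tsum_eq] at h0
    have ha0 : aF x 0 = 1 := by simp [aF]
    rw [ha0] at h0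
    linarith
  have haS1 : Summable (fun k => aF x (k + 1)) := (summable_nat_add_iff 1).2 ha.summable
  have hT : (∑' p : ℕ × ℕ, cA x p) = 1 + (s2 - 1) / 2 := by
    rw [hDeq, Summable.tsum_eq_zero_add hDsum, antidiagSum0]
    have hstep : ∀ n : ℕ, (∑ kl ∈ Finset.HasAntidiagonal.antidiagonal (n + 1), cA x kl)
        = aF (2 * x) (n + 1) / 2 := by
      intro n
      rw [antidiagSum x (n + 1) (Nat.succ_ne_zero n)]
      unfold aF
      rw [div_div]
      ring
    rw [tsum_congr hstep, tsum_div_const, hshift_a2]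
  -- fiberwise structure for cA
  have hslice : ∀ k, Summable (fun k' => cA x (k, k')) := by
    intro k
    exact Summable.of_nonneg_of_le (fun k' => hA0 (k, k')) (fun k' => hAle (k, k'))
      (hcS.mul_left (cF x k))
  have hgsum : HasSum (fun k => ∑' k', cA x (k, k')) (∑' p : ℕ × ℕ, cA x p) :=
    hAS.hasSum.prod_fiberwise fun k => (hslice k).hasSum
  have hrow0 : (∑' k', cA x (0, k')) = s := by
    have he : (fun k' => cA x (0, k')) = aF x := by
      funext k'
      rw [cA_eq]
      unfold cF aF
      rw [fact21_real]
      norm_num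
      rw [← div_div]
      ring
    rw [he, ha.tsum_eq]
  have hcol : ∀ k, cA x (k, 0) = aF x k := by
    intro k
    rw [cA_eq]
    unfold cF aF
    rw [fact21_real]
    norm_num
    rw [← div_div]
    ring
  have hinj : Function.Injective (fun p : ℕ × ℕ => (p.1 + 1, p.2 + 1)) := by
    intro p q h
    simp only [Prod.mk.injEq] at h
    exact Prod.ext_iff.mpr ⟨by omega, by omega⟩
  have hA'S : Summable (fun p : ℕ × ℕ => cA x (p.1 + 1, p.2 + 1)) := hAS.comp_injective hinj
  have hslice' : ∀ k, Summable (fun k' => cA x (k + 1, k' + 1)) := fun k =>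
    (summable_nat_add_iff 1).2 (hslice (k + 1))
  have hh : HasSum (fun k => ∑' k', cA x (k + 1, k' + 1))
      (∑' p : ℕ × ℕ, cA x (p.1 + 1, p.2 + 1)) :=
    hA'S.hasSum.prod_fiberwise fun k => (hslice' k).hasSum
  have hTA' : (∑' p : ℕ × ℕ, cA x (p.1 + 1, p.2 + 1)) = (∑' p : ℕ × ℕ, cA x p) - 2 * s + 1 := by
    have h0 := Summable.tsum_eq_zero_add hgsum.summable
    rw [hgsum.tsum_eq, hrow0] at h0
    have hstep : ∀ k, (∑' k', cA x (k + 1, k')) = aF x (k + 1) + ∑' k', cA x (k + 1, k' + 1) := by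
      intro k
      have h1 := Summable.tsum_eq_zero_add (hslice (k + 1))
      rw [hcol (k + 1)] at h1
      exact h1
    have h1 : (∑' k, ∑' k', cA x (k + 1, k'))
        = (s - 1) + ∑' p : ℕ × ℕ, cA x (p.1 + 1, p.2 + 1) := by
      rw [tsum_congr hstep, Summable.tsum_add haS1 hh.summable, hshift_a, hh.tsum_eq]
    rw [h1] at h0
    linarith
  -- B side
  have hB'S : Summable (fun p : ℕ × ℕ => cB x (p.1 + 1, p.2 + 1)) :=
    haS1.mul_of_nonneg haS1 (fun k => haFnn (k + 1)) (fun k => haFnn (k + 1))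
  have hTB' : (∑' p : ℕ × ℕ, cB x (p.1 + 1, p.2 + 1)) = (s - 1) ^ 2 := by
    have h1 := Summable.tsum_mul_tsum haS1 haS1 hB'S
    rw [hshift_a] at h1
    have h2 : (∑' p : ℕ × ℕ, cB x (p.1 + 1, p.2 + 1))
        = ∑' z : ℕ × ℕ, aF x (z.1 + 1) * aF x (z.2 + 1) := tsum_congr fun p => rfl
    rw [h2, ← h1]
    ring
  -- facts about fT
  have hfT_pos : ∀ p : ℕ × ℕ, (1 ≤ p.1 ∧ 1 ≤ p.2 ∧ 3 ≤ p.1 + p.2) →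
      fT x p = cA x p - cB x p := by
    intro p hp
    unfold fT
    rw [if_pos hp]
    exact term_eq x p
  have hfT_neg : ∀ p : ℕ × ℕ, ¬(1 ≤ p.1 ∧ 1 ≤ p.2 ∧ 3 ≤ p.1 + p.2) → fT x p = 0 := by
    intro p hp
    unfold fT
    rw [if_neg hp]
  have hf_nonneg : ∀ p : ℕ × ℕ, 0 ≤ fT x p := by
    intro p
    by_cases hp : 1 ≤ p.1 ∧ 1 ≤ p.2 ∧ 3 ≤ p.1 + p.2
    · rw [hfT_pos p hp]
      linarith [hBA p]
    · rw [hfT_neg p hp]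
  have hf_le : ∀ p : ℕ × ℕ, fT x p ≤ cA x p := by
    intro p
    by_cases hp : 1 ≤ p.1 ∧ 1 ≤ p.2 ∧ 3 ≤ p.1 + p.2
    · rw [hfT_pos p hp]
      linarith [hB0 p]
    · rw [hfT_neg p hp]
      exact hA0 p
  have hfS : Summable (fT x) := Summable.of_nonneg_of_le hf_nonneg hf_le hAS
  -- fiberwise structure for fT
  have hfslice : ∀ k, Summable (fun k' => fT x (k, k')) := by
    intro k
    exact Summable.of_nonneg_of_le (fun k' => hf_nonneg (k, k')) (fun k' => hf_le (k, k'))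
      (hslice k)
  have hfg : HasSum (fun k => ∑' k', fT x (k, k')) (∑' p : ℕ × ℕ, fT x p) :=
    hfS.hasSum.prod_fiberwise fun k => (hfslice k).hasSum
  have hfrow0 : (∑' k', fT x (0, k')) = 0 := by
    have he : (fun k' => fT x (0, k')) = fun _ => (0 : ℝ) := by
      funext k'
      exact hfT_neg (0, k') (by omega)
    rw [he, tsum_zero]
  have hfcol : ∀ k, fT x (k, 0) = 0 := fun k => hfT_neg (k, 0) (by omega)
  have hfS' : Summable (fun p : ℕ × ℕ => fT x (p.1 + 1, p.2 + 1)) := hfS.comp_injective hinj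
  have hfslice' : ∀ k, Summable (fun k' => fT x (k + 1, k' + 1)) := fun k =>
    (summable_nat_add_iff 1).2 (hfslice (k + 1))
  have hfh : HasSum (fun k => ∑' k', fT x (k + 1, k' + 1))
      (∑' p : ℕ × ℕ, fT x (p.1 + 1, p.2 + 1)) :=
    hfS'.hasSum.prod_fiberwise fun k => (hfslice' k).hasSum
  have hfsum_eq : (∑' p : ℕ × ℕ, fT x p) = ∑' p : ℕ × ℕ, fT x (p.1 + 1, p.2 + 1) := by
    have h0 := Summable.tsum_eq_zero_add hfg.summable
    rw [hfg.tsum_eq, hfrow0, zero_add] at h0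
    have hstep : ∀ k, (∑' k', fT x (k + 1, k')) = ∑' k', fT x (k + 1, k' + 1) := by
      intro k
      have h1 := Summable.tsum_eq_zero_add (hfslice (k + 1))
      rw [hfcol (k + 1), zero_add] at h1
      exact h1
    rw [tsum_congr hstep, hfh.tsum_eq] at h0
    exact h0
  -- identify the shifted fT
  have h11 : cA x (1, 1) - cB x (1, 1) = x ^ 4 / 45 := by
    unfold cA cB aF
    norm_num [Nat.factorial]
    ring_nf
  have hFshift : ∀ p : ℕ × ℕ, fT x (p.1 + 1, p.2 + 1)
      = (cA x (p.1 + 1, p.2 + 1) - cB x (p.1 + 1, p.2 + 1))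
        - (if p = ((0 : ℕ), (0 : ℕ)) then x ^ 4 / 45 else 0) := by
    intro p
    by_cases hp : p = ((0 : ℕ), (0 : ℕ))
    · subst hp
      rw [if_pos rfl]
      have hz : fT x (0 + 1, 0 + 1) = 0 := hfT_neg _ (by omega)
      rw [hz]
      simp only []
      rw [show ((0:ℕ) + 1, (0:ℕ) + 1) = ((1:ℕ), (1:ℕ)) from rfl, h11]
      ring
    · rw [if_neg hp]
      have hne : ¬(p.1 = 0 ∧ p.2 = 0) := by
        intro hc
        exact hp (Prod.ext_iff.mpr ⟨hc.1, hc.2⟩)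
      rw [hfT_pos (p.1 + 1, p.2 + 1) ⟨by omega, by omega, by omega⟩]
      ring
  have hdelta : HasSum (fun p : ℕ × ℕ => if p = ((0 : ℕ), (0 : ℕ)) then x ^ 4 / 45 else 0)
      (x ^ 4 / 45) := hasSum_ite_eq ((0 : ℕ), (0 : ℕ)) _
  have hfinal : (∑' p : ℕ × ℕ, fT x (p.1 + 1, p.2 + 1))
      = ((∑' p : ℕ × ℕ, cA x p) - 2 * s + 1) - (s - 1) ^ 2 - x ^ 4 / 45 := by
    rw [tsum_congr hFshift, Summable.tsum_sub ((hA'S.sub hB'S)) hdelta.summable,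
      Summable.tsum_sub hA'S hB'S, hTA', hTB', hdelta.tsum_eq]
  have hmain : (∑' p : ℕ × ℕ, fT x p)
      = (1 / 2) * (1 + s2 - 2 * s ^ 2 - 2 * x ^ 4 / 45) := by
    rw [hfsum_eq, hfinal, hT]
    ring
  exact ⟨hfS, hmain⟩
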